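/- Let n ≥ 1 and let I be an admissible n-element subset of [2n], and write v_I = (x, y) ∈ ℝ². Then x = 0 if and only if I is pair-free. Moreover, if I has at least one full pair, then x < 0 if and only if every full pair of I is above every empty pair of I, and x > 0 if and only if every empty pair of I is above every full pair of I. -/
import Mathlib


open Finset

/-- Position of `x` in the cyclic order on `[m] = {1,…,m}` starting at `a`:
`a` has position `0`, `a+1` position `1`, …, `a-1` position `m-1`. -/
def cpos (m a x : ℕ) : ℕ := (x + m - a) % m

/-- The strict cyclic order `x <_a y` on `[m]`. -/
def clt (m a x y : ℕ) : Prop := cpos m a x < cpos m a y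

instance (m a x y : ℕ) : Decidable (clt m a x y) :=
  inferInstanceAs (Decidable (_ < _))

/-- `I` and `J` are weakly separated as subsets of `[m]`: there do not exist
`c ∈ [m]` and `x₁ <_c x₂ <_c x₃ <_c x₄` with `x₁, x₃ ∈ I∖J` and `x₂, x₄ ∈ J∖I`. -/
def WSep (m : ℕ) (I J : Finset ℕ) : Prop :=
  ¬ ∃ c x₁ x₂ x₃ x₄ : ℕ, c ∈ Finset.Icc 1 m ∧
      x₁ ∈ I \ J ∧ x₃ ∈ I \ J ∧ x₂ ∈ J \ I ∧ x₄ ∈ J \ I ∧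
      clt m c x₁ x₂ ∧ clt m c x₂ x₃ ∧ clt m c x₃ x₄

/-- A weakly separated collection of `k`-element subsets of `[m]`. -/
def IsWSColl (m k : ℕ) (C : Finset (Finset ℕ)) : Prop :=
  (∀ I ∈ C, I ⊆ Finset.Icc 1 m ∧ I.card = k) ∧
    ∀ I ∈ C, ∀ J ∈ C, WSep m I J

/-- `Ī := [2n] ∖ {i' : i ∈ I}` where `i' = 2n+1-i`. -/
def bar (n : ℕ) (I : Finset ℕ) : Finset ℕ :=
  Finset.Icc 1 (2 * n) \ I.image fun i => 2 * n + 1 - i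

/-- A collection is symmetric if it is closed under `I ↦ Ī`. -/
def IsSym (n : ℕ) (C : Finset (Finset ℕ)) : Prop := ∀ I ∈ C, bar n I ∈ C

/-- `I` has a full pair at `{a, a'}`. -/
def FullPair (n : ℕ) (I : Finset ℕ) (a : ℕ) : Prop := a ∈ I ∧ 2 * n + 1 - a ∈ I

/-- `I` has an empty pair at `{a, a'}`. -/
def EmptyPair (n : ℕ) (I : Finset ℕ) (a : ℕ) : Prop := a ∉ I ∧ 2 * n + 1 - a ∉ I

instance (n : ℕ) (I : Finset ℕ) (a : ℕ) : Decidable (FullPair n I a) :=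
  inferInstanceAs (Decidable (_ ∈ I ∧ _ ∈ I))

instance (n : ℕ) (I : Finset ℕ) (a : ℕ) : Decidable (EmptyPair n I a) :=
  inferInstanceAs (Decidable (_ ∉ I ∧ _ ∉ I))

/-- `I` is pair-free: it has no full pair. -/
def PairFree (n : ℕ) (I : Finset ℕ) : Prop :=
  ∀ a ∈ Finset.Icc 1 n, ¬ FullPair n I a

instance (n : ℕ) (I : Finset ℕ) : Decidable (PairFree n I) :=
  inferInstanceAs (Decidable (∀ a ∈ Finset.Icc 1 n, ¬ FullPair n I a))

/-- `I` is admissible: `I` and `Ī` are weakly separated. -/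
def Admissible (n : ℕ) (I : Finset ℕ) : Prop := WSep (2 * n) I (bar n I)

/-- `I` is left-handed: admissible, has at least one full pair, and every full
pair of `I` is above every empty pair of `I`. -/
def LeftHanded (n : ℕ) (I : Finset ℕ) : Prop :=
  Admissible n I ∧ (∃ a ∈ Finset.Icc 1 n, FullPair n I a) ∧
    ∀ a ∈ Finset.Icc 1 n, ∀ b ∈ Finset.Icc 1 n,
      FullPair n I a → EmptyPair n I b → a < b

/-- The point `v_j = (cos θ_j, sin θ_j)` with `θ_j = π + (2j−1)π/(2n)`. -/
noncomputable def vpt (n j : ℕ) : ℝ × ℝ :=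
  (Real.cos (Real.pi + (2 * (j : ℝ) - 1) * Real.pi / (2 * (n : ℝ))),
   Real.sin (Real.pi + (2 * (j : ℝ) - 1) * Real.pi / (2 * (n : ℝ))))

/-- `v_I = ∑_{i ∈ I} v_i`. -/
noncomputable def vSet (n : ℕ) (I : Finset ℕ) : ℝ × ℝ := ∑ i ∈ I, vpt n i

-- ========== auxiliary development ==========

noncomputable def fx (n j : ℕ) : ℝ := (vpt n j).1

lemma cos_pi_add' (s : ℝ) : Real.cos (Real.pi + s) = -Real.cos s := by
  rw [Real.cos_add]; simp

lemma fx_neg_cos (n j : ℕ) :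
    fx n j = -Real.cos ((2 * (j : ℝ) - 1) * Real.pi / (2 * (n : ℝ))) := cos_pi_add' _

lemma fx_mirror (n : ℕ) (hn : 1 ≤ n) (a : ℕ) (h1 : 1 ≤ a) (h2 : a ≤ 2 * n) :
    fx n (2 * n + 1 - a) = fx n a := by
  have hc : ((2 * n + 1 - a : ℕ) : ℝ) = 2 * (n : ℝ) + 1 - (a : ℝ) := by
    have : a ≤ 2 * n + 1 := by omega
    push_cast [Nat.cast_sub this]; ring
  have hn' : (n : ℝ) ≠ 0 := by
    have : (1 : ℝ) ≤ (n : ℝ) := by exact_mod_cast hn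
    linarith
  show Real.cos _ = Real.cos _
  rw [hc]
  have key : Real.pi + (2 * (2 * (n:ℝ) + 1 - a) - 1) * Real.pi / (2 * n) =
      (Real.pi - (2 * (a:ℝ) - 1) * Real.pi / (2 * n)) + 2 * Real.pi := by
    field_simp; ring
  rw [key, Real.cos_add_two_pi, Real.cos_pi_sub, cos_pi_add']

lemma fx_strictmono (n : ℕ) (hn : 1 ≤ n) {a b : ℕ} (h1 : 1 ≤ a) (hab : a < b)
    (hb : b ≤ n) : fx n a < fx n b := by
  rw [fx_neg_cos, fx_neg_cos, neg_lt_neg_iff]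
  have hπ := Real.pi_pos
  have hnr : (1 : ℝ) ≤ (n : ℝ) := by exact_mod_cast hn
  have har : (1 : ℝ) ≤ (a : ℝ) := by exact_mod_cast h1
  have habr : (a : ℝ) < (b : ℝ) := by exact_mod_cast hab
  have hbr : (b : ℝ) ≤ (n : ℝ) := by exact_mod_cast hb
  have hden : (0 : ℝ) < 2 * n := by linarith
  have mem : ∀ c : ℕ, (1:ℝ) ≤ c → (c:ℝ) ≤ n →
      (2 * (c:ℝ) - 1) * Real.pi / (2 * n) ∈ Set.Icc 0 Real.pi := by
    intro c hc1 hc2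
    constructor
    · apply div_nonneg _ (le_of_lt hden); nlinarith
    · rw [div_le_iff₀ hden]; nlinarith
  apply Real.strictAntiOn_cos (mem a har (by linarith)) (mem b (by linarith) hbr)
  rw [div_lt_div_iff₀ hden hden]
  nlinarith [mul_pos hπ hden]

lemma fx_sum_zero (n : ℕ) (hn : 1 ≤ n) : ∑ a ∈ Icc 1 n, fx n a = 0 := by
  have key : ∀ a ∈ Icc 1 n, fx n (n + 1 - a) = -fx n a := by
    intro a ha
    rw [mem_Icc] at ha
    have hc : ((n + 1 - a : ℕ) : ℝ) = (n : ℝ) + 1 - (a : ℝ) := by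
      have : a ≤ n + 1 := by omega
      push_cast [Nat.cast_sub this]; ring
    have hn' : (n : ℝ) ≠ 0 := by
      have : (1 : ℝ) ≤ (n : ℝ) := by exact_mod_cast hn
      linarith
    have e : fx n (n + 1 - a) = Real.cos (Real.pi + (2 * ((n:ℝ) + 1 - a) - 1) * Real.pi / (2 * n)) := by
      show Real.cos _ = _
      rw [hc]
    rw [e, show Real.pi + (2 * ((n:ℝ) + 1 - a) - 1) * Real.pi / (2 * n) =
        2 * Real.pi - (2 * (a:ℝ) - 1) * Real.pi / (2 * n) from by field_simp; ring]
    rw [Real.cos_two_pi_sub, fx_neg_cos n a, neg_neg]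
  have h2 : ∑ a ∈ Icc 1 n, fx n a = ∑ a ∈ Icc 1 n, (-fx n a) := by
    refine Finset.sum_nbij' (fun a => n + 1 - a) (fun a => n + 1 - a) ?_ ?_ ?_ ?_ ?_
    · intro a ha; rw [mem_Icc] at ha; simp only [mem_Icc]; omega
    · intro a ha; rw [mem_Icc] at ha; simp only [mem_Icc]; omega
    · intro a ha; rw [mem_Icc] at ha; show n + 1 - (n + 1 - a) = a; omega
    · intro a ha; rw [mem_Icc] at ha; show n + 1 - (n + 1 - a) = a; omega
    · intro a ha
      rw [key a ha, neg_neg]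
  rw [Finset.sum_neg_distrib] at h2
  linarith

lemma sum_split {M : Type*} [AddCommMonoid M] (n : ℕ) (hn : 1 ≤ n) (I : Finset ℕ)
    (hI : I ⊆ Finset.Icc 1 (2 * n)) (G : ℕ → M) :
    ∑ i ∈ I, G i = ∑ a ∈ Finset.Icc 1 n,
      ((if a ∈ I then G a else 0) + (if 2 * n + 1 - a ∈ I then G (2 * n + 1 - a) else 0)) := by
  have hsplit : (Icc 1 n ∩ I) ∪ (Ioc n (2 * n) ∩ I) = I := by
    ext i
    simp only [mem_union, mem_inter, mem_Icc, mem_Ioc]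
    constructor
    · rintro (⟨_, h⟩ | ⟨_, h⟩) <;> exact h
    · intro h
      have h2 := mem_Icc.mp (hI h)
      by_cases hc : i ≤ n
      · exact Or.inl ⟨⟨h2.1, hc⟩, h⟩
      · exact Or.inr ⟨⟨by omega, h2.2⟩, h⟩
  have hdisj : Disjoint (Icc 1 n ∩ I) (Ioc n (2 * n) ∩ I) := by
    simp only [Finset.disjoint_left, mem_inter, mem_Icc, mem_Ioc]
    rintro x ⟨⟨_, h⟩, _⟩ ⟨⟨h', _⟩, _⟩; omega
  have hmain : ∑ i ∈ I, G i = ∑ i ∈ Icc 1 n ∩ I, G i + ∑ i ∈ Ioc n (2 * n) ∩ I, G i := by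
    rw [← Finset.sum_union hdisj, hsplit]
  rw [Finset.sum_add_distrib, hmain]
  congr 1
  · rw [Finset.sum_ite_mem]
  · rw [← Finset.sum_ite_mem]
    refine Finset.sum_nbij' (fun b => 2 * n + 1 - b) (fun a => 2 * n + 1 - a) ?_ ?_ ?_ ?_ ?_
    · intro b hb; rw [mem_Ioc] at hb; simp only [mem_Icc]; omega
    · intro a ha; rw [mem_Icc] at ha; simp only [mem_Ioc]; omega
    · intro b hb; rw [mem_Ioc] at hb; show 2 * n + 1 - (2 * n + 1 - b) = b; omega
    · intro a ha; rw [mem_Icc] at ha; show 2 * n + 1 - (2 * n + 1 - a) = a; omega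
    · intro b hb
      rw [mem_Ioc] at hb
      show _ = if 2 * n + 1 - (2 * n + 1 - b) ∈ I then G (2 * n + 1 - (2 * n + 1 - b)) else 0
      rw [show 2 * n + 1 - (2 * n + 1 - b) = b from by omega]


lemma card_FE (n : ℕ) (hn : 1 ≤ n) (I : Finset ℕ) (hI : I ⊆ Finset.Icc 1 (2 * n))
    (hcard : I.card = n) :
    ((Icc 1 n).filter (fun a => FullPair n I a)).card = ((Icc 1 n).filter (fun a => EmptyPair n I a)).card := by
  have hs := sum_split (M := ℤ) n hn I hI (fun _ => 1)
  rw [Finset.sum_const, nsmul_eq_mul, mul_one, hcard] at hs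
  have h2 : ∀ a ∈ Icc 1 n, ((if FullPair n I a then (1 : ℤ) else 0) - (if EmptyPair n I a then 1 else 0))
      = ((if a ∈ I then (1 : ℤ) else 0) + (if 2 * n + 1 - a ∈ I then 1 else 0)) - 1 := by
    intro a _
    by_cases hx : a ∈ I <;> by_cases hy : 2 * n + 1 - a ∈ I <;>
      simp [FullPair, EmptyPair, hx, hy]
  have h3 := Finset.sum_congr rfl h2
  rw [Finset.sum_sub_distrib, Finset.sum_sub_distrib, Finset.sum_boole, Finset.sum_boole,
    ← hs, Finset.sum_const, nsmul_eq_mul, mul_one, Nat.card_Icc] at h3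
  have : (((Icc 1 n).filter (fun a => FullPair n I a)).card : ℤ) = ((Icc 1 n).filter (fun a => EmptyPair n I a)).card := by
    simp only [Nat.add_sub_cancel] at h3
    omega
  exact_mod_cast this

lemma xval (n : ℕ) (hn : 1 ≤ n) (I : Finset ℕ) (hI : I ⊆ Finset.Icc 1 (2 * n)) :
    (vSet n I).1 = ∑ a ∈ (Icc 1 n).filter (fun a => FullPair n I a), fx n a
      - ∑ a ∈ (Icc 1 n).filter (fun a => EmptyPair n I a), fx n a := by
  have h0 : (vSet n I).1 = ∑ i ∈ I, fx n i := by
    rw [vSet, Prod.fst_sum]; rfl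
  rw [h0, sum_split n hn I hI (fx n)]
  have key : ∀ a ∈ Icc 1 n,
      ((if a ∈ I then fx n a else 0) + (if 2 * n + 1 - a ∈ I then fx n (2 * n + 1 - a) else 0))
      = fx n a + ((if FullPair n I a then fx n a else 0) - (if EmptyPair n I a then fx n a else 0)) := by
    intro a ha
    rw [mem_Icc] at ha
    rw [fx_mirror n hn a ha.1 (by omega)]
    by_cases hx : a ∈ I <;> by_cases hy : 2 * n + 1 - a ∈ I <;>
      simp [FullPair, EmptyPair, hx, hy] <;> ring
  rw [Finset.sum_congr rfl key, Finset.sum_add_distrib, fx_sum_zero n hn,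
    Finset.sum_sub_distrib, ← Finset.sum_filter, ← Finset.sum_filter]
  ring

lemma mem_bar_iff (n : ℕ) (I : Finset ℕ) (hI : I ⊆ Finset.Icc 1 (2 * n)) (b : ℕ) :
    b ∈ bar n I ↔ (1 ≤ b ∧ b ≤ 2 * n ∧ 2 * n + 1 - b ∉ I) := by
  constructor
  · intro hb
    rw [bar, Finset.mem_sdiff] at hb
    obtain ⟨h1, h2⟩ := hb
    rw [Finset.mem_Icc] at h1
    refine ⟨h1.1, h1.2, fun hc => h2 ?_⟩
    exact Finset.mem_image.mpr ⟨2 * n + 1 - b, hc, by omega⟩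
  · rintro ⟨h1, h2, h3⟩
    rw [bar, Finset.mem_sdiff, Finset.mem_Icc]
    refine ⟨⟨h1, h2⟩, fun hc => ?_⟩
    obtain ⟨i, hiI, hib⟩ := Finset.mem_image.mp hc
    have hi := Finset.mem_Icc.mp (hI hiI)
    have heq : i = 2 * n + 1 - b := by omega
    exact h3 (heq ▸ hiI)

lemma clt_one (n x y : ℕ) (h1 : 1 ≤ x) (hxy : x < y) (h2 : y ≤ 2 * n) :
    clt (2 * n) 1 x y := by
  unfold clt cpos
  have e1 : (x + 2 * n - 1) % (2 * n) = x - 1 := by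
    rw [Nat.mod_eq_sub_mod (by omega)]
    rw [show x + 2 * n - 1 - 2 * n = x - 1 from by omega]
    exact Nat.mod_eq_of_lt (by omega)
  have e2 : (y + 2 * n - 1) % (2 * n) = y - 1 := by
    rw [Nat.mod_eq_sub_mod (by omega)]
    rw [show y + 2 * n - 1 - 2 * n = y - 1 from by omega]
    exact Nat.mod_eq_of_lt (by omega)
  rw [e1, e2]
  omega

lemma no_FEF (n : ℕ) (hn : 1 ≤ n) (I : Finset ℕ) (hI : I ⊆ Finset.Icc 1 (2 * n))
    (hadm : Admissible n I) {p q r : ℕ} (hp1 : 1 ≤ p) (hpq : p < q) (hqr : q < r)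
    (hr : r ≤ n) (hfp : FullPair n I p) (heq : EmptyPair n I q)
    (hfr : FullPair n I r) : False := by
  apply hadm
  refine ⟨1, p, q, r, 2 * n + 1 - q, ?_, ?_, ?_, ?_, ?_, ?_, ?_, ?_⟩
  · rw [Finset.mem_Icc]; omega
  · rw [Finset.mem_sdiff]
    exact ⟨hfp.1, fun hc => ((mem_bar_iff n I hI p).mp hc).2.2 hfp.2⟩
  · rw [Finset.mem_sdiff]
    exact ⟨hfr.1, fun hc => ((mem_bar_iff n I hI r).mp hc).2.2 hfr.2⟩
  · rw [Finset.mem_sdiff]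
    exact ⟨(mem_bar_iff n I hI q).mpr ⟨by omega, by omega, heq.2⟩, heq.1⟩
  · rw [Finset.mem_sdiff]
    refine ⟨(mem_bar_iff n I hI _).mpr ⟨by omega, by omega, ?_⟩, heq.2⟩
    rw [show 2 * n + 1 - (2 * n + 1 - q) = q from by omega]
    exact heq.1
  · exact clt_one n p q hp1 hpq (by omega)
  · exact clt_one n q r (by omega) hqr (by omega)
  · exact clt_one n r (2 * n + 1 - q) (by omega) (by omega) (by omega)

lemma no_EFE (n : ℕ) (hn : 1 ≤ n) (I : Finset ℕ) (hI : I ⊆ Finset.Icc 1 (2 * n))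
    (hadm : Admissible n I) {p q r : ℕ} (hp1 : 1 ≤ p) (hpq : p < q) (hqr : q < r)
    (hr : r ≤ n) (hep : EmptyPair n I p) (hfq : FullPair n I q)
    (her : EmptyPair n I r) : False := by
  apply hadm
  refine ⟨1, q, r, 2 * n + 1 - q, 2 * n + 1 - p, ?_, ?_, ?_, ?_, ?_, ?_, ?_, ?_⟩
  · rw [Finset.mem_Icc]; omega
  · rw [Finset.mem_sdiff]
    exact ⟨hfq.1, fun hc => ((mem_bar_iff n I hI q).mp hc).2.2 hfq.2⟩
  · rw [Finset.mem_sdiff]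
    refine ⟨hfq.2, fun hc => ?_⟩
    have := ((mem_bar_iff n I hI _).mp hc).2.2
    rw [show 2 * n + 1 - (2 * n + 1 - q) = q from by omega] at this
    exact this hfq.1
  · rw [Finset.mem_sdiff]
    exact ⟨(mem_bar_iff n I hI r).mpr ⟨by omega, by omega, her.2⟩, her.1⟩
  · rw [Finset.mem_sdiff]
    refine ⟨(mem_bar_iff n I hI _).mpr ⟨by omega, by omega, ?_⟩, hep.2⟩
    rw [show 2 * n + 1 - (2 * n + 1 - p) = p from by omega]
    exact hep.1
  · exact clt_one n q r (by omega) hqr (by omega)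
  · exact clt_one n r (2 * n + 1 - q) (by omega) (by omega) (by omega)
  · exact clt_one n (2 * n + 1 - q) (2 * n + 1 - p) (by omega) (by omega) (by omega)

lemma dichotomy (n : ℕ) (hn : 1 ≤ n) (I : Finset ℕ) (hI : I ⊆ Finset.Icc 1 (2 * n))
    (hadm : Admissible n I) :
    (∀ a ∈ Finset.Icc 1 n, ∀ b ∈ Finset.Icc 1 n,
        FullPair n I a → EmptyPair n I b → a < b) ∨
    (∀ a ∈ Finset.Icc 1 n, ∀ b ∈ Finset.Icc 1 n,
        EmptyPair n I a → FullPair n I b → a < b) := by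
  by_contra h
  push_neg at h
  obtain ⟨⟨a, ha, b, hb, hfa, heb, hba⟩, ⟨c, hc, d, hd, hec, hfd, hdc⟩⟩ := h
  rw [mem_Icc] at ha hb hc hd
  have hba' : b < a := lt_of_le_of_ne hba (fun h => heb.1 (h ▸ hfa.1))
  have hdc' : d < c := lt_of_le_of_ne hdc (fun h => hec.1 (h ▸ hfd.1))
  by_cases hcase : d < b
  · exact no_FEF n hn I hI hadm hd.1 hcase hba' ha.2 hfd heb hfa
  · have hbd : b < d := lt_of_le_of_ne (by omega) (fun h => heb.1 (h ▸ hfd.1))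
    exact no_EFE n hn I hI hadm hb.1 hbd hdc' hc.2 heb hfd hec

lemma sum_FE_lt (n : ℕ) (hn : 1 ≤ n) (F E : Finset ℕ) (hFs : F ⊆ Icc 1 n)
    (hEs : E ⊆ Icc 1 n) (hcard : F.card = E.card) (hF : F.Nonempty)
    (hlt : ∀ a ∈ F, ∀ b ∈ E, a < b) : ∑ a ∈ F, fx n a < ∑ a ∈ E, fx n a := by
  have hE : E.Nonempty := by
    rw [← Finset.card_pos, ← hcard, Finset.card_pos]; exact hF
  set b0 := E.min' hE with hb0def
  have hb0 : b0 ∈ E := E.min'_mem hE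
  have h1 : ∑ a ∈ F, fx n a < ∑ _a ∈ F, fx n b0 := by
    apply Finset.sum_lt_sum_of_nonempty hF
    intro a ha
    exact fx_strictmono n hn (mem_Icc.mp (hFs ha)).1 (hlt a ha b0 hb0)
      (mem_Icc.mp (hEs hb0)).2
  have h2 : ∑ _a ∈ E, fx n b0 ≤ ∑ a ∈ E, fx n a := by
    apply Finset.sum_le_sum
    intro b hb
    rcases eq_or_lt_of_le (E.min'_le b hb) with h | h
    · rw [← h]
    · exact le_of_lt (fx_strictmono n hn (mem_Icc.mp (hEs hb0)).1 h
        (mem_Icc.mp (hEs hb)).2)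
  rw [Finset.sum_const] at h1 h2
  rw [hcard] at h1
  linarith

/-- For an admissible `n`-element subset `I` of `[2n]` with
`v_I = (x, y)`: `x = 0` iff `I` is pair-free; and if `I` has a full pair, then
`x < 0` iff every full pair of `I` is above every empty pair, and `x > 0` iff
every empty pair of `I` is above every full pair. -/
theorem statement15 (n : ℕ) (hn : 1 ≤ n) (I : Finset ℕ)
    (hI : I ⊆ Finset.Icc 1 (2 * n)) (hcard : I.card = n)
    (hadm : Admissible n I) :
    ((vSet n I).1 = 0 ↔ PairFree n I) ∧
    ((∃ a ∈ Finset.Icc 1 n, FullPair n I a) →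
      (((vSet n I).1 < 0 ↔
          ∀ a ∈ Finset.Icc 1 n, ∀ b ∈ Finset.Icc 1 n,
            FullPair n I a → EmptyPair n I b → a < b) ∧
       (0 < (vSet n I).1 ↔
          ∀ a ∈ Finset.Icc 1 n, ∀ b ∈ Finset.Icc 1 n,
            EmptyPair n I a → FullPair n I b → a < b))) := by
  set F := (Icc 1 n).filter (fun a => FullPair n I a) with hFdef
  set E := (Icc 1 n).filter (fun a => EmptyPair n I a) with hEdef
  have hFE : F.card = E.card := card_FE n hn I hI hcard
  have hx : (vSet n I).1 = ∑ a ∈ F, fx n a - ∑ a ∈ E, fx n a := xval n hn I hI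
  have hFs : F ⊆ Icc 1 n := Finset.filter_subset _ _
  have hEs : E ⊆ Icc 1 n := Finset.filter_subset _ _
  have hPiff : (∀ a ∈ Icc 1 n, ∀ b ∈ Icc 1 n, FullPair n I a → EmptyPair n I b → a < b)
      ↔ (∀ a ∈ F, ∀ b ∈ E, a < b) := by
    constructor
    · intro h a ha b hb
      rw [hFdef, mem_filter] at ha
      rw [hEdef, mem_filter] at hb
      exact h a ha.1 b hb.1 ha.2 hb.2
    · intro h a ha b hb hfa heb
      exact h a (by rw [hFdef, mem_filter]; exact ⟨ha, hfa⟩)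
        b (by rw [hEdef, mem_filter]; exact ⟨hb, heb⟩)
  have hQiff : (∀ a ∈ Icc 1 n, ∀ b ∈ Icc 1 n, EmptyPair n I a → FullPair n I b → a < b)
      ↔ (∀ a ∈ E, ∀ b ∈ F, a < b) := by
    constructor
    · intro h a ha b hb
      rw [hEdef, mem_filter] at ha
      rw [hFdef, mem_filter] at hb
      exact h a ha.1 b hb.1 ha.2 hb.2
    · intro h a ha b hb hea hfb
      exact h a (by rw [hEdef, mem_filter]; exact ⟨ha, hea⟩)
        b (by rw [hFdef, mem_filter]; exact ⟨hb, hfb⟩)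
  have hEneF : F.Nonempty → E.Nonempty := by
    intro h
    rw [← Finset.card_pos, ← hFE, Finset.card_pos]; exact h
  have hPneg : (∀ a ∈ Icc 1 n, ∀ b ∈ Icc 1 n, FullPair n I a → EmptyPair n I b → a < b) →
      F.Nonempty → (vSet n I).1 < 0 := by
    intro hP hFne
    have := sum_FE_lt n hn F E hFs hEs hFE hFne (hPiff.mp hP)
    rw [hx]; linarith
  have hQpos : (∀ a ∈ Icc 1 n, ∀ b ∈ Icc 1 n, EmptyPair n I a → FullPair n I b → a < b) →
      F.Nonempty → 0 < (vSet n I).1 := by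
    intro hQ hFne
    have := sum_FE_lt n hn E F hEs hFs hFE.symm (hEneF hFne) (hQiff.mp hQ)
    rw [hx]; linarith
  have hPF : PairFree n I ↔ F = ∅ := by
    rw [hFdef, Finset.filter_eq_empty_iff]
    exact Iff.rfl
  have hexF : (∃ a ∈ Finset.Icc 1 n, FullPair n I a) → F.Nonempty := by
    rintro ⟨a, ha, hfa⟩
    exact ⟨a, by rw [hFdef, mem_filter]; exact ⟨ha, hfa⟩⟩
  constructor
  · constructor
    · intro hx0
      by_contra hnpf
      have hFne : F.Nonempty := by
        rw [Finset.nonempty_iff_ne_empty]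
        exact fun h => hnpf (hPF.mpr h)
      rcases dichotomy n hn I hI hadm with hP | hQ
      · have := hPneg hP hFne; linarith
      · have := hQpos hQ hFne; linarith
    · intro hpf
      have hF0 : F = ∅ := hPF.mp hpf
      have hE0 : E = ∅ := Finset.card_eq_zero.mp (by rw [← hFE, hF0, card_empty])
      rw [hx, hF0, hE0]; simp
  · intro hex
    have hFne : F.Nonempty := hexF hex
    have hEne : E.Nonempty := hEneF hFne
    have hPQ : ¬((∀ a ∈ Icc 1 n, ∀ b ∈ Icc 1 n, FullPair n I a → EmptyPair n I b → a < b)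
        ∧ (∀ a ∈ Icc 1 n, ∀ b ∈ Icc 1 n, EmptyPair n I a → FullPair n I b → a < b)) := by
      rintro ⟨hP, hQ⟩
      obtain ⟨a, ha⟩ := hFne
      obtain ⟨b, hb⟩ := hEne
      rw [hFdef, mem_filter] at ha
      rw [hEdef, mem_filter] at hb
      have h1 := hP a ha.1 b hb.1 ha.2 hb.2
      have h2 := hQ b hb.1 a ha.1 hb.2 ha.2
      omega
    rcases dichotomy n hn I hI hadm with hP | hQ
    · have hneg := hPneg hP hFne
      refine ⟨⟨fun _ => hP, fun _ => hneg⟩, ⟨fun hpos => absurd hpos (by linarith), ?_⟩⟩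
      intro hQ
      exact absurd ⟨hP, hQ⟩ hPQ
    · have hpos := hQpos hQ hFne
      refine ⟨⟨fun hneg => absurd hneg (by linarith), ?_⟩, ⟨fun _ => hQ, fun _ => hpos⟩⟩
      intro hP
      exact absurd ⟨hP, hQ⟩ hPQ
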